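/- Let κ be a positive even integer. Then 2^{κ/2} · Σ_{0 ≤ j ≤ κ/8} C(κ/2, j) ≤ 2^{11κ/12}, where the sum runs over integers j with 0 ≤ j ≤ κ/8 and C(κ/2, j) denotes the binomial coefficient. -/

import Mathlib

lemma sum_choose_le_aux (n m : ℕ) :
    ∑ j ∈ Finset.range (m + 1), ((n.choose j : ℝ)) ≤ 3 ^ m * (4 / 3) ^ n := by
  have h1 : ∑ j ∈ Finset.range (m + 1), ((n.choose j : ℝ))
      ≤ ∑ j ∈ Finset.range (m + 1), 3 ^ m * ((1 / 3 : ℝ) ^ j * (n.choose j : ℝ)) := by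
    apply Finset.sum_le_sum
    intro j hj
    simp only [Finset.mem_range, Nat.lt_succ_iff] at hj
    have h3 : (1 : ℝ) ≤ 3 ^ m * (1 / 3 : ℝ) ^ j := by
      rw [one_div, inv_pow, ← div_eq_mul_inv, one_le_div (by positivity)]
      exact pow_le_pow_right₀ (by norm_num) hj
    nlinarith [Nat.cast_nonneg (α := ℝ) (n.choose j)]
  refine h1.trans ?_
  rw [← Finset.mul_sum]
  apply mul_le_mul_of_nonneg_left _ (by positivity)
  have h2 : ∑ j ∈ Finset.range (m + 1), ((1 / 3 : ℝ) ^ j * (n.choose j : ℝ))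
      ≤ ∑ j ∈ Finset.range (m + n + 1), ((1 / 3 : ℝ) ^ j * (n.choose j : ℝ)) := by
    apply Finset.sum_le_sum_of_subset_of_nonneg
    · apply Finset.range_subset_range.2; omega
    · intro j _ _; positivity
  refine h2.trans ?_
  have h4 : ∑ j ∈ Finset.range (m + n + 1), ((1 / 3 : ℝ) ^ j * (n.choose j : ℝ))
      = ∑ j ∈ Finset.range (n + 1), ((1 / 3 : ℝ) ^ j * (n.choose j : ℝ)) := by
    refine (Finset.sum_subset (Finset.range_subset_range.2 (show n + 1 ≤ m + n + 1 by omega)) ?_).symm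
    intro j _ hj
    simp only [Finset.mem_range, Nat.lt_succ_iff, not_le] at hj
    rw [Nat.choose_eq_zero_of_lt hj]
    simp
  rw [h4]
  have := add_pow (1 / 3 : ℝ) 1 n
  simp only [one_pow, mul_one] at this
  have h5 : (4 / 3 : ℝ) ^ n = ∑ j ∈ Finset.range (n + 1),
      ((1 / 3 : ℝ) ^ j * (n.choose j : ℝ)) := by
    rw [show (4 / 3 : ℝ) = 1 / 3 + 1 by norm_num, this]
  rw [h5]

/-- for even `κ ≥ 1`, `2^{κ/2} ∑_{0 ≤ j ≤ κ/8} C(κ/2, j) ≤ 2^{11κ/12}`. -/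
theorem binomial_tail_sum_le_even
    (κ : ℕ) (hκ : 0 < κ) (hκe : Even κ) :
    (2 : ℝ) ^ (κ / 2) * ∑ j ∈ Finset.range (κ / 8 + 1), ((κ / 2).choose j : ℝ)
      ≤ (2 : ℝ) ^ ((11 * (κ : ℝ)) / 12) := by
  obtain ⟨t, ht⟩ := hκe
  set n := κ / 2 with hn
  set m := κ / 8 with hm
  have hmn : 4 * m ≤ n := by omega
  have hκn : κ = 2 * n := by omega
  have step1 : (2 : ℝ) ^ n * ∑ j ∈ Finset.range (m + 1), ((n.choose j : ℝ))
      ≤ (2 : ℝ) ^ n * (3 ^ m * (4 / 3) ^ n) :=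
    mul_le_mul_of_nonneg_left (sum_choose_le_aux n m) (by positivity)
  refine step1.trans ?_
  -- raise to the 12th power
  have hnat : 2 ^ (36 * n) * 3 ^ (12 * m) ≤ 2 ^ (22 * n) * 3 ^ (12 * n) := by
    have h1 : (3 : ℕ) ^ (12 * m) ≤ 3 ^ (3 * n) :=
      Nat.pow_le_pow_right (by norm_num) (by omega)
    calc 2 ^ (36 * n) * 3 ^ (12 * m) ≤ 2 ^ (36 * n) * 3 ^ (3 * n) :=
          Nat.mul_le_mul_left _ h1
      _ = (2 ^ 36 * 3 ^ 3) ^ n := by rw [mul_pow, ← pow_mul, ← pow_mul]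
      _ ≤ (2 ^ 22 * 3 ^ 12) ^ n := Nat.pow_le_pow_left (by norm_num) n
      _ = 2 ^ (22 * n) * 3 ^ (12 * n) := by rw [mul_pow, ← pow_mul, ← pow_mul]
  have hreal : ((2 : ℝ) ^ n * (3 ^ m * (4 / 3) ^ n)) ^ 12
      ≤ ((2 : ℝ) ^ (11 * κ)) := by
    have hcast : (2 : ℝ) ^ (36 * n) * 3 ^ (12 * m) ≤ 2 ^ (22 * n) * 3 ^ (12 * n) := by
      exact_mod_cast Nat.cast_le.2 hnat
    have h3 : (0 : ℝ) < 3 ^ (12 * n) := by positivity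
    rw [hκn]
    have : ((2 : ℝ) ^ n * (3 ^ m * (4 / 3) ^ n)) ^ 12
        = (2 : ℝ) ^ (36 * n) * 3 ^ (12 * m) / 3 ^ (12 * n) := by
      field_simp
      rw [div_pow]
      field_simp
      rw [show (4 : ℝ) ^ n = 2 ^ n * 2 ^ n by
        rw [← mul_pow]; norm_num, show 36 * n = 12 * n + 12 * n + 12 * n by ring, pow_add, pow_add]
      ring
    rw [this, div_le_iff₀ h3]
    calc (2 : ℝ) ^ (36 * n) * 3 ^ (12 * m) ≤ 2 ^ (22 * n) * 3 ^ (12 * n) := hcast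
      _ = 2 ^ (11 * (2 * n)) * 3 ^ (12 * n) := by ring_nf
  have hR : ((2 : ℝ) ^ ((11 * (κ : ℝ)) / 12)) ^ 12 = (2 : ℝ) ^ (11 * κ) := by
    rw [← Real.rpow_natCast ((2:ℝ) ^ ((11 * (κ:ℝ))/12)) 12, ← Real.rpow_mul (by norm_num)]
    rw [show (11 * (κ : ℝ)) / 12 * (12 : ℕ) = ((11 * κ : ℕ) : ℝ) by push_cast; ring]
    exact Real.rpow_natCast 2 (11 * κ)
  have hLnn : (0 : ℝ) ≤ (2 : ℝ) ^ n * (3 ^ m * (4 / 3) ^ n) := by positivity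
  have hRnn : (0 : ℝ) ≤ (2 : ℝ) ^ ((11 * (κ : ℝ)) / 12) := Real.rpow_nonneg (by norm_num) _
  have := hreal.trans_eq hR.symm
  exact (pow_le_pow_iff_left₀ hLnn hRnn (by norm_num)).mp this
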